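/- If M ≺ H_θ is a δ-guessing model which is not an ℵ₀-guessing model, then 2^{<δ} ≥ κ_M. -/

import Mathlib

open Cardinal

namespace GuessingModels

/-- First-order formulas in the language of set theory (membership and equality),
with `n` free variables. -/
inductive SF : ℕ → Type
  | mem {n} (i j : Fin n) : SF n
  | eq {n} (i j : Fin n) : SF n
  | imp {n} (f g : SF n) : SF n
  | not {n} (f : SF n) : SF n
  | ex {n} (f : SF (n + 1)) : SF n

/-- Tarskian satisfaction of a set-theoretic formula in the structure `⟨S, ∈⟩`,
where `S` is a class of ZF sets. -/
def Realize (S : Set ZFSet) : ∀ {n}, SF n → (Fin n → ZFSet) → Prop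
  | _, .mem i j, v => v i ∈ v j
  | _, .eq i j, v => v i = v j
  | _, .imp f g, v => Realize S f v → Realize S g v
  | _, .not f, v => ¬ Realize S f v
  | _, .ex f, v => ∃ x ∈ S, Realize S f (Fin.cons x v)

/-- `M ≺ R` : `M` is an elementary substructure of `⟨R, ∈⟩`. -/
def Prec (M R : Set ZFSet) : Prop :=
  M ⊆ R ∧ ∀ {n : ℕ} (φ : SF n) (v : Fin n → ZFSet), (∀ i, v i ∈ M) →
    (Realize M φ v ↔ Realize R φ v)

/-- A (von Neumann) ordinal: a transitive set of transitive sets. -/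
def IsOrd (x : ZFSet) : Prop :=
  x.IsTransitive ∧ ∀ y ∈ x, ZFSet.IsTransitive y

/-- `≤` on ordinals, i.e. `∈` or `=`. -/
def ole (a b : ZFSet) : Prop := a ∈ b ∨ a = b

/-- The cardinality of (the extension of) a ZF set. -/
noncomputable def card (x : ZFSet) : Cardinal := Cardinal.mk x.toSet

/-- A ZF set which is a cardinal: an ordinal not equinumerous with any of its members. -/
def IsCard (κ : ZFSet) : Prop := IsOrd κ ∧ ∀ β ∈ κ, card β < card κ

/-- `s` (an external class) is a cofinal subset of the ordinal `κ`. -/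
def CofinalSetIn (s : Set ZFSet) (κ : ZFSet) : Prop :=
  (∀ x ∈ s, x ∈ κ) ∧ ∀ β ∈ κ, ∃ γ ∈ s, ole β γ

/-- A regular cardinal: an infinite cardinal all of whose cofinal subsets have full size. -/
def IsRegCard (κ : ZFSet) : Prop :=
  IsCard κ ∧ ZFSet.omega ⊆ κ ∧
    ∀ s : Set ZFSet, CofinalSetIn s κ → Cardinal.mk s = card κ

/-- A strong limit ZF cardinal. -/
def IsStrongLimit (κ : ZFSet) : Prop := ∀ β ∈ κ, (2 : Cardinal) ^ card β < card κ

/-- A strongly inaccessible cardinal: regular, uncountable and strong limit. -/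
def IsInacc (κ : ZFSet) : Prop := IsRegCard κ ∧ ZFSet.omega ∈ κ ∧ IsStrongLimit κ

/-- The transitive closure of a ZF set, as a class. -/
def tcl (x : ZFSet) : Set ZFSet := {y | Relation.TransGen (· ∈ ·) y x}

/-- `H_θ` : the class of sets hereditarily of size `< θ`. -/
noncomputable def HSet (θ : ZFSet) : Set ZFSet := {x | Cardinal.mk (tcl x) < card θ}

/-- `V_α` as a class, for `α` an ordinal (as a ZF set): sets of rank `< α`. -/
noncomputable def VSet (α : ZFSet) : Set ZFSet := {x | x.rank < α.rank}

/-- A suitable initial segment: `H_θ` for a regular cardinal `θ`, or a rank initial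
segment `V_α`. -/
def Suitable (R : Set ZFSet) : Prop :=
  (∃ θ : ZFSet, IsRegCard θ ∧ R = HSet θ) ∨ (∃ α : ZFSet, IsOrd α ∧ R = VSet α)

/-- `κ = κ_M` : `κ` is the least ordinal in `M` with `M ∩ κ ≠ κ`. -/
def KappaSpec (M : Set ZFSet) (κ : ZFSet) : Prop :=
  IsOrd κ ∧ κ ∈ M ∧ (∃ β ∈ κ, β ∉ M) ∧
    ∀ α : ZFSet, IsOrd α → α ∈ M → (∃ β ∈ α, β ∉ M) → ole κ α

/-- `d` is `(δ, M)`-approximated: `d ∩ Z ∈ M` for every `Z ∈ M` of size `< δ`. -/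
noncomputable def Approx (M : Set ZFSet) (δ : Cardinal.{1}) (d : ZFSet) : Prop :=
  ∀ Z : ZFSet, Z ∈ M → card Z < δ → (d ∩ Z) ∈ M

/-- `d ⊆ X` is `M`-guessed: `d ∩ M = e ∩ M` for some `e ∈ M ∩ P(X)`. -/
def Guessed (M : Set ZFSet) (X d : ZFSet) : Prop :=
  ∃ e : ZFSet, e ∈ M ∧ e ⊆ X ∧ ∀ z ∈ M, (z ∈ e ↔ z ∈ d)

/-- `M` is a `δ`-guessing model: every `(δ,M)`-approximated subset of any `X ∈ M`
is `M`-guessed. -/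
noncomputable def GuessingModel (M : Set ZFSet) (δ : Cardinal.{1}) : Prop :=
  ∀ X ∈ M, ∀ d : ZFSet, d ⊆ X → Approx M δ d → Guessed M X d

/-- `M` is `ℵ₁`-internally unbounded: every countable subset of `M` is contained
in a countable element of `M`. -/
noncomputable def IntUnb (M : Set ZFSet) : Prop :=
  ∀ A : Set ZFSet, A ⊆ M → A.Countable → ∃ z ∈ M, card z ≤ ℵ₀ ∧ A ⊆ z.toSet


/-! ### Auxiliary set-theoretic lemmas -/

section Aux

lemma _root_.ZFSet.mem_toSet (a u : ZFSet) : a ∈ u.toSet ↔ a ∈ u := Iff.rfl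

lemma mem_tcl_of_mem {x y : ZFSet} (h : y ∈ x) : y ∈ tcl x := Relation.TransGen.single h

lemma toSet_subset_tcl (x : ZFSet) : x.toSet ⊆ tcl x := fun _ hy => Relation.TransGen.single hy

lemma tcl_mem_subset {x y : ZFSet} (h : y ∈ x) : tcl y ⊆ tcl x := fun _ hz =>
  hz.trans (Relation.TransGen.single h)

lemma tcl_mem_tcl {x a t : ZFSet} (ha : a ∈ tcl x) (ht : t ∈ a) : t ∈ tcl x :=
  Relation.TransGen.head ht ha

lemma tcl_subset_of {f : ZFSet} {T : Set ZFSet} (h1 : f.toSet ⊆ T)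
    (h2 : ∀ a ∈ T, a.toSet ⊆ T) : tcl f ⊆ T := by
  intro y hy
  induction hy using Relation.TransGen.head_induction_on with
  | single h => exact h1 h
  | head h _ ih => exact h2 _ ih h

lemma hset_mem_of_mem {θ x y : ZFSet} (hx : x ∈ HSet θ) (hy : y ∈ x) : y ∈ HSet θ :=
  lt_of_le_of_lt (Cardinal.mk_le_mk_of_subset (tcl_mem_subset hy)) hx

/-- The elements `0, 1, 2, …` of `ω`. -/
private def natZ : ℕ → ZFSet
  | 0 => ∅
  | n + 1 => insert (natZ n) (natZ n)

private lemma natZ_mem_omega (n : ℕ) : natZ n ∈ ZFSet.omega := by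
  induction n with
  | zero => exact ZFSet.omega_zero
  | succ n ih => exact ZFSet.omega_succ ih

private lemma natZ_mem {m n : ℕ} (h : m < n) : natZ m ∈ natZ n := by
  induction n with
  | zero => omega
  | succ n ih =>
    rcases Nat.lt_succ_iff_lt_or_eq.mp h with h | h
    · exact ZFSet.mem_insert_iff.mpr (Or.inr (ih h))
    · subst h; exact ZFSet.mem_insert_iff.mpr (Or.inl rfl)

private lemma natZ_inj : Function.Injective natZ := by
  intro m n h
  by_contra hne
  rcases Nat.lt_or_ge m n with hlt | hge
  · exact ZFSet.mem_irrefl _ (h ▸ natZ_mem hlt)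
  · exact ZFSet.mem_irrefl _ (h ▸ natZ_mem (lt_of_le_of_ne hge (Ne.symm hne)))

lemma aleph0_le_card {θ : ZFSet} (hθ : ZFSet.omega ⊆ θ) : ℵ₀ ≤ card θ := by
  rw [card, Cardinal.aleph0_le_mk_iff]
  exact Infinite.of_injective (fun n => (⟨natZ n, hθ (natZ_mem_omega n)⟩ : θ.toSet))
    fun m n h => natZ_inj (congrArg Subtype.val h)

lemma card_lt_card_of_hset {θ x : ZFSet} (hx : x ∈ HSet θ) : card x < card θ :=
  lt_of_le_of_lt (Cardinal.mk_le_mk_of_subset (toSet_subset_tcl x)) hx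

lemma hset_pair {θ b c : ZFSet} (hinf : ℵ₀ ≤ card θ) (hb : b ∈ HSet θ) (hc : c ∈ HSet θ) :
    ({b, c} : ZFSet) ∈ HSet θ := by
  have hsub : tcl ({b, c} : ZFSet) ⊆ (({b, c} : ZFSet)).toSet ∪ (tcl b ∪ tcl c) := by
    refine tcl_subset_of (fun a ha => Or.inl ha) ?_
    rintro a (ha | ha | ha)
    · rw [ZFSet.mem_toSet, ZFSet.mem_pair] at ha
      rcases ha with rfl | rfl
      · exact fun t ht => Or.inr (Or.inl (Relation.TransGen.single ht))
      · exact fun t ht => Or.inr (Or.inr (Relation.TransGen.single ht))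
    · exact fun t ht => Or.inr (Or.inl (tcl_mem_tcl ha ht))
    · exact fun t ht => Or.inr (Or.inr (tcl_mem_tcl ha ht))
  have hfin : Cardinal.mk (({b, c} : ZFSet)).toSet < ℵ₀ := by
    have : (({b, c} : ZFSet)).toSet = {b, c} := by
      ext x; simp [ZFSet.mem_toSet, ZFSet.mem_pair]
    rw [this]
    exact ((Set.finite_singleton c).insert b).lt_aleph0
  calc Cardinal.mk (tcl ({b, c} : ZFSet)) ≤
      Cardinal.mk ((({b, c} : ZFSet)).toSet ∪ (tcl b ∪ tcl c) : Set ZFSet) :=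
        Cardinal.mk_le_mk_of_subset hsub
    _ ≤ Cardinal.mk (({b, c} : ZFSet)).toSet + Cardinal.mk ((tcl b ∪ tcl c : Set ZFSet)) :=
        Cardinal.mk_union_le _ _
    _ ≤ Cardinal.mk (({b, c} : ZFSet)).toSet + (Cardinal.mk (tcl b) + Cardinal.mk (tcl c)) :=
        add_le_add le_rfl (Cardinal.mk_union_le _ _)
    _ < card θ := Cardinal.add_lt_of_lt hinf (hfin.trans_le hinf)
        (Cardinal.add_lt_of_lt hinf hb hc)

lemma hset_singleton {θ b : ZFSet} (hinf : ℵ₀ ≤ card θ) (hb : b ∈ HSet θ) :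
    ({b} : ZFSet) ∈ HSet θ := by
  have : ({b} : ZFSet) = ({b, b} : ZFSet) := by ext x; simp [ZFSet.mem_pair]
  rw [this]; exact hset_pair hinf hb hb

lemma hset_kpair {θ b c : ZFSet} (hinf : ℵ₀ ≤ card θ) (hb : b ∈ HSet θ) (hc : c ∈ HSet θ) :
    ZFSet.pair b c ∈ HSet θ :=
  hset_pair hinf (hset_singleton hinf hb) (hset_pair hinf hb hc)

lemma hset_of_subset {θ Z y : ZFSet} (hZ : Z ∈ HSet θ) (h : y ⊆ Z) : y ∈ HSet θ := by
  have : tcl y ⊆ tcl Z :=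
    tcl_subset_of (fun a ha => Relation.TransGen.single (h ha)) fun a ha t ht =>
      tcl_mem_tcl ha ht
  exact lt_of_le_of_lt (Cardinal.mk_le_mk_of_subset this) hZ

lemma card_powerset_le (Z : ZFSet) :
    Cardinal.mk (Z.powerset).toSet ≤ (2 : Cardinal.{1}) ^ card Z := by
  have h : Cardinal.mk (Z.powerset).toSet ≤ Cardinal.mk (Set Z.toSet) := by
    refine ⟨⟨fun y => {z : Z.toSet | z.1 ∈ y.1}, ?_⟩⟩
    intro y₁ y₂ h
    have hy₁ := ZFSet.mem_powerset.mp ((ZFSet.mem_toSet _ _).mp y₁.2)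
    have hy₂ := ZFSet.mem_powerset.mp ((ZFSet.mem_toSet _ _).mp y₂.2)
    have h' : {z : Z.toSet | z.1 ∈ y₁.1} = {z : Z.toSet | z.1 ∈ y₂.1} := h
    refine Subtype.ext (ZFSet.ext fun t => ⟨fun ht => ?_, fun ht => ?_⟩)
    · have : (⟨t, hy₁ ht⟩ : Z.toSet) ∈ {z : Z.toSet | z.1 ∈ y₁.1} := ht
      rw [h'] at this; exact this
    · have : (⟨t, hy₂ ht⟩ : Z.toSet) ∈ {z : Z.toSet | z.1 ∈ y₂.1} := ht
      rw [← h'] at this; exact this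
  simpa [card, Cardinal.mk_set] using h

lemma hset_powerset {θ Z : ZFSet} (hinf : ℵ₀ ≤ card θ) (hZ : Z ∈ HSet θ)
    (hpow : (2 : Cardinal.{1}) ^ card Z < card θ) : Z.powerset ∈ HSet θ := by
  have hsub : tcl Z.powerset ⊆ (Z.powerset).toSet ∪ tcl Z := by
    refine tcl_subset_of (fun a ha => Or.inl ha) ?_
    rintro a (ha | ha)
    · rw [ZFSet.mem_toSet, ZFSet.mem_powerset] at ha
      exact fun t ht => Or.inr (Relation.TransGen.single (ha ht))
    · exact fun t ht => Or.inr (tcl_mem_tcl ha ht)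
  calc Cardinal.mk (tcl Z.powerset) ≤ Cardinal.mk ((Z.powerset).toSet ∪ tcl Z : Set ZFSet) :=
        Cardinal.mk_le_mk_of_subset hsub
    _ ≤ Cardinal.mk (Z.powerset).toSet + Cardinal.mk (tcl Z) := Cardinal.mk_union_le _ _
    _ < card θ := Cardinal.add_lt_of_lt hinf ((card_powerset_le Z).trans_lt hpow) hZ

end Aux

/-! ### Ordinal lemmas -/

section Ord

lemma isOrd_mem {κ α : ZFSet} (h : IsOrd κ) (hα : α ∈ κ) : IsOrd α :=
  ⟨h.2 α hα, fun y hy => h.2 y (h.1 α hα hy)⟩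

lemma ord_trichotomy (a : ZFSet) : ∀ b : ZFSet, IsOrd a → IsOrd b →
    a ∈ b ∨ a = b ∨ b ∈ a := by
  induction a using ZFSet.inductionOn with
  | _ a iha =>
  intro b
  induction b using ZFSet.inductionOn with
  | _ b ihb =>
  intro ha hb
  by_cases hab : a ∈ b
  · exact Or.inl hab
  by_cases hba : b ∈ a
  · exact Or.inr (Or.inr hba)
  refine Or.inr (Or.inl (ZFSet.ext fun x => ⟨fun hx => ?_, fun hx => ?_⟩))
  · rcases iha x hx b (isOrd_mem ha hx) hb with h | h | h
    · exact h
    · exact absurd (h ▸ hx) hba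
    · exact absurd (ha.1 x hx h) hba
  · rcases ihb x hx ha (isOrd_mem hb hx) with h | h | h
    · exact absurd (hb.1 x hx h) hab
    · exact absurd (h ▸ hx) hab
    · exact h

lemma exists_large_member {κ : ZFSet} (hκ : IsOrd κ) {c : Cardinal.{1}}
    (hc : c < card κ) : ∃ β ∈ κ, c ≤ card β := by
  classical
  let r : κ.toSet → κ.toSet → Prop := fun a b => a.1 ∈ b.1
  haveI : IsWellOrder κ.toSet r :=
    { trichotomous := by
        intro a b hab hba
        rcases ord_trichotomy a.1 b.1 (isOrd_mem hκ a.2) (isOrd_mem hκ b.2) with h | h | h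
        · exact absurd h hab
        · exact Subtype.ext h
        · exact absurd h hba
      wf := InvImage.wf Subtype.val ZFSet.mem_wf }
  have hcard : Ordinal.card (Ordinal.type r) = card κ := Ordinal.card_type r
  have htype : c.ord < Ordinal.type r := by
    by_contra h
    push_neg at h
    have h2 : c < (Ordinal.type r).card := hcard.symm ▸ hc
    have := h2.trans_le (Ordinal.card_le_card h)
    rw [Cardinal.card_ord] at this
    exact lt_irrefl _ this
  obtain ⟨x, hx⟩ := Ordinal.typein_surj r htype
  refine ⟨x.1, x.2, ?_⟩
  have h1 : Ordinal.card (Ordinal.typein r x) = Cardinal.mk {y : κ.toSet // r y x} :=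
    Ordinal.card_typein x
  have h2 : Cardinal.mk {y : κ.toSet // r y x} = card x.1 := by
    refine Cardinal.mk_congr ⟨fun y => ⟨y.1.1, y.2⟩,
      fun z => ⟨⟨z.1, hκ.1 x.1 x.2 z.2⟩, z.2⟩, fun y => ?_, fun z => rfl⟩
    · apply Subtype.ext; apply Subtype.ext; rfl
  have : c = card x.1 := by
    rw [← h2, ← h1, hx, Cardinal.card_ord]
  exact this.le
end Ord

/-! ### Formula combinators and their semantics -/

section Formulas

/-- Conjunction. -/
def andF {n} (f g : SF n) : SF n := .not (.imp f (.not g))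
/-- Disjunction. -/
def orF {n} (f g : SF n) : SF n := .imp (.not f) g
/-- Biimplication. -/
def iffF {n} (f g : SF n) : SF n := andF (.imp f g) (.imp g f)
/-- Universal quantification. -/
def allF {n} (f : SF (n + 1)) : SF n := .not (.ex (.not f))

@[simp] lemma realize_mem {S : Set ZFSet} {n} {i j : Fin n} {v : Fin n → ZFSet} :
    Realize S (.mem i j) v ↔ v i ∈ v j := Iff.rfl

@[simp] lemma realize_eq {S : Set ZFSet} {n} {i j : Fin n} {v : Fin n → ZFSet} :
    Realize S (.eq i j) v ↔ v i = v j := Iff.rfl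

@[simp] lemma realize_imp {S : Set ZFSet} {n} {f g : SF n} {v : Fin n → ZFSet} :
    Realize S (.imp f g) v ↔ (Realize S f v → Realize S g v) := Iff.rfl

@[simp] lemma realize_not {S : Set ZFSet} {n} {f : SF n} {v : Fin n → ZFSet} :
    Realize S (.not f) v ↔ ¬ Realize S f v := Iff.rfl

@[simp] lemma realize_ex {S : Set ZFSet} {n} {f : SF (n + 1)} {v : Fin n → ZFSet} :
    Realize S (.ex f) v ↔ ∃ x ∈ S, Realize S f (Fin.cons x v) := Iff.rfl

@[simp] lemma realize_andF {S : Set ZFSet} {n} {f g : SF n} {v : Fin n → ZFSet} :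
    Realize S (andF f g) v ↔ (Realize S f v ∧ Realize S g v) := by
  simp only [andF, realize_not, realize_imp]; tauto

@[simp] lemma realize_orF {S : Set ZFSet} {n} {f g : SF n} {v : Fin n → ZFSet} :
    Realize S (orF f g) v ↔ (Realize S f v ∨ Realize S g v) := by
  simp only [orF, realize_not, realize_imp]; tauto

@[simp] lemma realize_iffF {S : Set ZFSet} {n} {f g : SF n} {v : Fin n → ZFSet} :
    Realize S (iffF f g) v ↔ (Realize S f v ↔ Realize S g v) := by
  simp only [iffF, realize_andF, realize_imp]; exact iff_iff_implies_and_implies.symm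

@[simp] lemma realize_allF {S : Set ZFSet} {n} {f : SF (n + 1)} {v : Fin n → ZFSet} :
    Realize S (allF f) v ↔ ∀ x ∈ S, Realize S f (Fin.cons x v) := by
  simp only [allF, realize_not, realize_ex]; push_neg; rfl

end Formulas

/-! ### Specific formulas -/

section Specific

/-- A transitive class closed under unordered pairs. -/
structure GoodS (S : Set ZFSet) : Prop where
  tr : ∀ x ∈ S, ∀ y ∈ x, y ∈ S
  up : ∀ x ∈ S, ∀ y ∈ S, ({x, y} : ZFSet) ∈ S

lemma GoodS.sng {S : Set ZFSet} (hS : GoodS S) {x : ZFSet} (hx : x ∈ S) :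
    ({x} : ZFSet) ∈ S := by
  have h : ({x} : ZFSet) = ({x, x} : ZFSet) := by ext t; simp [ZFSet.mem_pair]
  rw [h]; exact hS.up x hx x hx

lemma GoodS.kp {S : Set ZFSet} (hS : GoodS S) {x y : ZFSet} (hx : x ∈ S) (hy : y ∈ S) :
    ZFSet.pair x y ∈ S :=
  hS.up _ (hS.sng hx) _ (hS.up x hx y hy)

/-- `a ⊆ b`. -/
def subF {n} (a b : Fin n) : SF n := allF (.imp (.mem 0 a.succ) (.mem 0 b.succ))

lemma realize_subF {S : Set ZFSet} (hS : GoodS S) {n} {a b : Fin n} {v : Fin n → ZFSet}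
    (ha : v a ∈ S) : Realize S (subF a b) v ↔ v a ⊆ v b := by
  simp only [subF, realize_allF, realize_imp, realize_mem, Fin.cons_succ, Fin.cons_zero]
  rw [ZFSet.subset_def]
  constructor
  · intro h z hz; exact h z (hS.tr _ ha z hz) hz
  · intro h x _ hx; exact h hx

/-- `p = 𝒫 z`. -/
def powF {n} (p z : Fin n) : SF n := allF (iffF (.mem 0 p.succ) (subF 0 z.succ))

lemma realize_powF {S : Set ZFSet} (hS : GoodS S) {n} {p z : Fin n} {v : Fin n → ZFSet}
    (hp : v p ∈ S) (hcl : ∀ y : ZFSet, y ⊆ v z → y ∈ S) :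
    Realize S (powF p z) v ↔ v p = ZFSet.powerset (v z) := by
  simp only [powF, realize_allF, realize_iffF, realize_mem, Fin.cons_succ, Fin.cons_zero]
  have hsub : ∀ x : ZFSet, x ∈ S →
      (Realize S (subF 0 z.succ) (Fin.cons x v) ↔ x ⊆ v z) := by
    intro x hx
    rw [realize_subF hS (by simp only [Fin.cons_zero]; exact hx)]
    simp only [Fin.cons_zero, Fin.cons_succ]
  constructor
  · intro h
    apply ZFSet.ext; intro y
    constructor
    · intro hy
      have hyS : y ∈ S := hS.tr _ hp y hy
      rw [ZFSet.mem_powerset, ← hsub y hyS]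
      exact (h y hyS).1 hy
    · intro hy
      rw [ZFSet.mem_powerset] at hy
      have hyS := hcl y hy
      exact (h y hyS).2 ((hsub y hyS).2 hy)
  · intro hEq x hx
    rw [hEq, ZFSet.mem_powerset, hsub x hx]

/-- `t = {b}`. -/
def sngF {n} (t b : Fin n) : SF n := allF (iffF (.mem 0 t.succ) (.eq 0 b.succ))

lemma realize_sngF {S : Set ZFSet} (hS : GoodS S) {n} {t b : Fin n} {v : Fin n → ZFSet}
    (ht : v t ∈ S) (hb : v b ∈ S) : Realize S (sngF t b) v ↔ v t = ({v b} : ZFSet) := by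
  simp only [sngF, realize_allF, realize_iffF, realize_mem, realize_eq, Fin.cons_succ,
    Fin.cons_zero]
  constructor
  · intro h
    apply ZFSet.ext; intro y
    rw [ZFSet.mem_singleton]
    constructor
    · intro hy; exact (h y (hS.tr _ ht y hy)).1 hy
    · rintro rfl; exact (h _ hb).2 rfl
  · intro h x hx
    rw [h, ZFSet.mem_singleton]

/-- `t = {b, c}`. -/
def upF {n} (t b c : Fin n) : SF n :=
  allF (iffF (.mem 0 t.succ) (orF (.eq 0 b.succ) (.eq 0 c.succ)))

lemma realize_upF {S : Set ZFSet} (hS : GoodS S) {n} {t b c : Fin n} {v : Fin n → ZFSet}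
    (ht : v t ∈ S) (hb : v b ∈ S) (hc : v c ∈ S) :
    Realize S (upF t b c) v ↔ v t = ({v b, v c} : ZFSet) := by
  simp only [upF, realize_allF, realize_iffF, realize_orF, realize_mem, realize_eq,
    Fin.cons_succ, Fin.cons_zero]
  constructor
  · intro h
    apply ZFSet.ext; intro y
    rw [ZFSet.mem_pair]
    constructor
    · intro hy; exact (h y (hS.tr _ ht y hy)).1 hy
    · rintro (rfl | rfl)
      · exact (h _ hb).2 (Or.inl rfl)
      · exact (h _ hc).2 (Or.inr rfl)
  · intro h x hx
    rw [h, ZFSet.mem_pair]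

/-- `u = ⟨b, c⟩` (Kuratowski). -/
def opF {n} (u b c : Fin n) : SF n :=
  allF (iffF (.mem 0 u.succ) (orF (sngF 0 b.succ) (upF 0 b.succ c.succ)))

lemma realize_opF {S : Set ZFSet} (hS : GoodS S) {n} {u b c : Fin n} {v : Fin n → ZFSet}
    (hu : v u ∈ S) (hb : v b ∈ S) (hc : v c ∈ S) :
    Realize S (opF u b c) v ↔ v u = ZFSet.pair (v b) (v c) := by
  simp only [opF, realize_allF, realize_iffF, realize_orF, realize_mem, Fin.cons_succ,
    Fin.cons_zero]
  have hs : ∀ x : ZFSet, x ∈ S →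
      (Realize S (sngF 0 b.succ) (Fin.cons x v) ↔ x = ({v b} : ZFSet)) := by
    intro x hx
    rw [realize_sngF hS (by simp only [Fin.cons_zero]; exact hx)
      (by simp only [Fin.cons_succ]; exact hb)]
    simp only [Fin.cons_zero, Fin.cons_succ]
  have hup : ∀ x : ZFSet, x ∈ S →
      (Realize S (upF 0 b.succ c.succ) (Fin.cons x v) ↔ x = ({v b, v c} : ZFSet)) := by
    intro x hx
    rw [realize_upF hS (by simp only [Fin.cons_zero]; exact hx)
      (by simp only [Fin.cons_succ]; exact hb) (by simp only [Fin.cons_succ]; exact hc)]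
    simp only [Fin.cons_zero, Fin.cons_succ]
  constructor
  · intro h
    apply ZFSet.ext; intro y
    rw [ZFSet.pair, ZFSet.mem_pair]
    constructor
    · intro hy
      have hyS := hS.tr _ hu y hy
      rcases (h y hyS).1 hy with h' | h'
      · exact Or.inl ((hs y hyS).1 h')
      · exact Or.inr ((hup y hyS).1 h')
    · rintro (rfl | rfl)
      · exact (h _ (hS.sng hb)).2 (Or.inl ((hs _ (hS.sng hb)).2 rfl))
      · exact (h _ (hS.up _ hb _ hc)).2 (Or.inr ((hup _ (hS.up _ hb _ hc)).2 rfl))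
  · intro hEq x hx
    rw [hEq, ZFSet.pair, ZFSet.mem_pair, hs x hx, hup x hx]

/-- `⟨b, c⟩ ∈ g`. -/
def pmemF {n} (b c g : Fin n) : SF n := .ex (andF (.mem 0 g.succ) (opF 0 b.succ c.succ))

lemma realize_pmemF {S : Set ZFSet} (hS : GoodS S) {n} {b c g : Fin n} {v : Fin n → ZFSet}
    (hb : v b ∈ S) (hc : v c ∈ S) :
    Realize S (pmemF b c g) v ↔ ZFSet.pair (v b) (v c) ∈ v g := by
  simp only [pmemF, realize_ex, realize_andF, realize_mem, Fin.cons_zero, Fin.cons_succ]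
  have hop : ∀ u : ZFSet, u ∈ S →
      (Realize S (opF 0 b.succ c.succ) (Fin.cons u v) ↔ u = ZFSet.pair (v b) (v c)) := by
    intro u hu
    rw [realize_opF hS (by simp only [Fin.cons_zero]; exact hu)
      (by simp only [Fin.cons_succ]; exact hb) (by simp only [Fin.cons_succ]; exact hc)]
    simp only [Fin.cons_zero, Fin.cons_succ]
  constructor
  · rintro ⟨u, huS, hug, hopr⟩
    rw [(hop u huS).1 hopr] at hug
    exact hug
  · intro h
    exact ⟨_, hS.kp hb hc, h, (hop _ (hS.kp hb hc)).2 rfl⟩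

/-- `g` is injective-as-a-relation in its second coordinate:
`⟨y,b⟩ ∈ g → ⟨y',b⟩ ∈ g → y = y'`. -/
def injF {n} (g : Fin n) : SF n :=
  allF (allF (allF (.imp
    (andF (pmemF ((0 : Fin (n + 1)).succ.succ) 0 g.succ.succ.succ)
          (pmemF ((0 : Fin (n + 2)).succ) 0 g.succ.succ.succ))
    (.eq ((0 : Fin (n + 1)).succ.succ) ((0 : Fin (n + 2)).succ)))))

lemma realize_injF {S : Set ZFSet} (hS : GoodS S) {n} {g : Fin n} {v : Fin n → ZFSet} :
    Realize S (injF g) v ↔ ∀ y ∈ S, ∀ y' ∈ S, ∀ b ∈ S,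
      ZFSet.pair y b ∈ v g → ZFSet.pair y' b ∈ v g → y = y' := by
  simp only [injF, realize_allF, realize_imp, realize_andF, realize_eq]
  constructor
  · intro h y hy y' hy' b hb h1 h2
    have := h y hy y' hy' b hb
    rw [realize_pmemF hS (by simp only [Fin.cons_succ, Fin.cons_zero]; exact hy)
        (by simp only [Fin.cons_zero]; exact hb),
      realize_pmemF hS (by simp only [Fin.cons_succ, Fin.cons_zero]; exact hy')
        (by simp only [Fin.cons_zero]; exact hb)] at this
    simp only [Fin.cons_succ, Fin.cons_zero] at this
    exact this ⟨h1, h2⟩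
  · intro h y hy y' hy' b hb
    rw [realize_pmemF hS (by simp only [Fin.cons_succ, Fin.cons_zero]; exact hy)
        (by simp only [Fin.cons_zero]; exact hb),
      realize_pmemF hS (by simp only [Fin.cons_succ, Fin.cons_zero]; exact hy')
        (by simp only [Fin.cons_zero]; exact hb)]
    simp only [Fin.cons_succ, Fin.cons_zero]
    rintro ⟨h1, h2⟩
    exact h y hy y' hy' b hb h1 h2

/-- `∀ y (y ∈ w ↔ ∃ b ∈ a, ⟨y,b⟩ ∈ g)`. -/
def surjF {n} (w a g : Fin n) : SF n :=
  allF (iffF (.mem 0 w.succ)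
    (.ex (andF (.mem 0 a.succ.succ) (pmemF ((0 : Fin (n + 1)).succ) 0 g.succ.succ))))

lemma realize_surjF {S : Set ZFSet} (hS : GoodS S) {n} {w a g : Fin n} {v : Fin n → ZFSet} :
    Realize S (surjF w a g) v ↔ ∀ y ∈ S,
      (y ∈ v w ↔ ∃ b ∈ S, b ∈ v a ∧ ZFSet.pair y b ∈ v g) := by
  simp only [surjF, realize_allF, realize_iffF, realize_ex, realize_andF, realize_mem,
    Fin.cons_succ, Fin.cons_zero]
  refine forall₂_congr fun y hy => ?_
  have hpm : ∀ b : ZFSet, b ∈ S →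
      (Realize S (pmemF ((0 : Fin (n + 1)).succ) 0 g.succ.succ) (Fin.cons b (Fin.cons y v)) ↔
        ZFSet.pair y b ∈ v g) := by
    intro b hb
    rw [realize_pmemF hS (by simp only [Fin.cons_succ, Fin.cons_zero]; exact hy)
        (by simp only [Fin.cons_zero]; exact hb)]
    simp only [Fin.cons_succ, Fin.cons_zero]
  exact iff_congr Iff.rfl (exists_congr fun b => and_congr_right fun hbS =>
    and_congr_right fun _ => hpm b hbS)

end Specific

/-! ### Elementarity arguments -/

section Elem

/-- Length-1 parameter vector. -/
def vec1 (x : ZFSet) : Fin 1 → ZFSet := Fin.cons x fun i => i.elim0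
/-- Length-2 parameter vector. -/
def vec2 (x y : ZFSet) : Fin 2 → ZFSet := Fin.cons x (Fin.cons y fun i => i.elim0)

lemma vecCons_mem {M : Set ZFSet} {n : ℕ} {v : Fin n → ZFSet} (hv : ∀ i, v i ∈ M)
    {x : ZFSet} (hx : x ∈ M) :
    ∀ i, (Fin.cons x v : Fin (n + 1) → ZFSet) i ∈ M := fun i =>
  Fin.cases (motive := fun j => (Fin.cons x v : Fin (n + 1) → ZFSet) j ∈ M) hx hv i

lemma vec1_mem {M : Set ZFSet} {x : ZFSet} (hx : x ∈ M) : ∀ i, vec1 x i ∈ M :=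
  vecCons_mem (fun i => i.elim0) hx

lemma vec2_mem {M : Set ZFSet} {x y : ZFSet} (hx : x ∈ M) (hy : y ∈ M) :
    ∀ i, vec2 x y i ∈ M :=
  vecCons_mem (vecCons_mem (fun i => i.elim0) hy) hx

lemma goodS_hset {θ : ZFSet} (hinf : ℵ₀ ≤ card θ) : GoodS (HSet θ) :=
  ⟨fun x hx y hy => hset_mem_of_mem hx hy, fun x hx y hy => hset_pair hinf hx hy⟩

/-- `∃ p, p = 𝒫 z₀`. -/
def psiF : SF 1 := .ex (powF 0 ((0 : Fin 1).succ))

lemma powerset_mem_M {θ : ZFSet} {M : Set ZFSet} (hinf : ℵ₀ ≤ card θ)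
    (hM : Prec M (HSet θ)) {Z : ZFSet} (hZ : Z ∈ M)
    (hpow : (2 : Cardinal.{1}) ^ card Z < card θ) : Z.powerset ∈ M := by
  have hS : GoodS (HSet θ) := goodS_hset hinf
  have hZS : Z ∈ HSet θ := hM.1 hZ
  have hclo : ∀ y : ZFSet, y ⊆ Z → y ∈ HSet θ := fun y hy => hset_of_subset hZS hy
  have hps : Z.powerset ∈ HSet θ := hset_powerset hinf hZS hpow
  have hv1 : ∀ i, vec1 Z i ∈ M := vec1_mem hZ
  have hRe : Realize (HSet θ) psiF (vec1 Z) := by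
    refine ⟨Z.powerset, hps, ?_⟩
    rw [realize_powF hS (by simp only [Fin.cons_zero]; exact hps)
      (by intro y hy; apply hclo; simpa [vec1] using hy)]
    simp [vec1]
  have hRM : Realize M psiF (vec1 Z) := (hM.2 psiF (vec1 Z) hv1).mpr hRe
  obtain ⟨p, hpM, hpr⟩ := hRM
  have hv2 : ∀ i, (Fin.cons p (vec1 Z) : Fin 2 → ZFSet) i ∈ M := vecCons_mem hv1 hpM
  have hpθ : Realize (HSet θ) (powF 0 ((0 : Fin 1).succ)) (Fin.cons p (vec1 Z)) :=
    (hM.2 _ _ hv2).mp hpr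
  rw [realize_powF hS (by simp only [Fin.cons_zero]; exact hM.1 hpM)
    (by intro y hy; apply hclo; simpa [vec1] using hy)] at hpθ
  simp only [Fin.cons_zero, Fin.cons_succ, vec1] at hpθ
  rw [← hpθ]
  exact hpM

lemma map_mem_hset {θ w β : ZFSet} (hinf : ℵ₀ ≤ card θ) (hw : w ∈ HSet θ)
    (hβ : β ∈ HSet θ) (g : ZFSet → ZFSet) [inst : ZFSet.Definable₁ g]
    (hg : ∀ y ∈ w, g y ∈ β) : ZFSet.map g w ∈ HSet θ := by
  classical
  set A : Set ZFSet := (ZFSet.map g w).toSet with hA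
  set B1 : Set ZFSet := (fun y => ({y} : ZFSet)) '' w.toSet with hB1
  set B2 : Set ZFSet := (fun y => ({y, g y} : ZFSet)) '' w.toSet with hB2
  set T : Set ZFSet := A ∪ (B1 ∪ B2) ∪ (tcl w ∪ tcl β) with hT
  have hsub : tcl (ZFSet.map g w) ⊆ T := by
    refine tcl_subset_of (fun a ha => Or.inl (Or.inl ha)) ?_
    rintro a ((hA' | hB' | hB') | hC' | hC') t ht
    · rw [ZFSet.mem_toSet, ZFSet.mem_map] at hA'
      obtain ⟨z, hz, rfl⟩ := hA'
      rw [ZFSet.mem_toSet] at ht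
      rcases (ZFSet.mem_pair).1 (by simpa [ZFSet.pair] using ht) with rfl | rfl
      · exact Or.inl (Or.inr (Or.inl ⟨z, hz, rfl⟩))
      · exact Or.inl (Or.inr (Or.inr ⟨z, hz, rfl⟩))
    · obtain ⟨z, hz, rfl⟩ := hB'
      rw [ZFSet.mem_toSet, ZFSet.mem_singleton] at ht
      subst ht
      exact Or.inr (Or.inl (Relation.TransGen.single hz))
    · obtain ⟨z, hz, rfl⟩ := hB'
      rw [ZFSet.mem_toSet, ZFSet.mem_pair] at ht
      rcases ht with rfl | rfl
      · exact Or.inr (Or.inl (Relation.TransGen.single hz))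
      · exact Or.inr (Or.inr (Relation.TransGen.single (hg z hz)))
    · exact Or.inr (Or.inl (tcl_mem_tcl hC' ((ZFSet.mem_toSet _ _).1 ht)))
    · exact Or.inr (Or.inr (tcl_mem_tcl hC' ((ZFSet.mem_toSet _ _).1 ht)))
  have hwc : Cardinal.mk w.toSet < card θ :=
    lt_of_le_of_lt (Cardinal.mk_le_mk_of_subset (toSet_subset_tcl w)) hw
  have hAc : Cardinal.mk A < card θ := by
    refine lt_of_le_of_lt (Cardinal.mk_le_of_surjective
      (f := fun z : w.toSet => (⟨ZFSet.pair z.1 (g z.1),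
        (ZFSet.mem_toSet _ _).2 (ZFSet.mem_map.2 ⟨z.1, (ZFSet.mem_toSet _ _).1 z.2, rfl⟩)⟩ : A))
      ?_) hwc
    rintro ⟨a, ha⟩
    rw [hA, ZFSet.mem_toSet, ZFSet.mem_map] at ha
    obtain ⟨z, hz, hzeq⟩ := ha
    exact ⟨⟨z, (ZFSet.mem_toSet _ _).2 hz⟩, Subtype.ext hzeq⟩
  have hB1c : Cardinal.mk B1 < card θ := lt_of_le_of_lt (Cardinal.mk_image_le) hwc
  have hB2c : Cardinal.mk B2 < card θ := lt_of_le_of_lt (Cardinal.mk_image_le) hwc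
  have hβc : Cardinal.mk (tcl β) < card θ := hβ
  have hTc : Cardinal.mk T < card θ := by
    refine lt_of_le_of_lt ((Cardinal.mk_union_le _ _).trans
      (add_le_add ((Cardinal.mk_union_le _ _).trans
        (add_le_add le_rfl (Cardinal.mk_union_le _ _))) (Cardinal.mk_union_le _ _))) ?_
    exact Cardinal.add_lt_of_lt hinf
      (Cardinal.add_lt_of_lt hinf hAc (Cardinal.add_lt_of_lt hinf hB1c hB2c))
      (Cardinal.add_lt_of_lt hinf hw hβc)
  exact lt_of_le_of_lt (Cardinal.mk_le_mk_of_subset hsub) hTc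

end Elem

/-! ### The main argument -/

section Main

/-- `∃ α ∃ f, α ∈ κ₀ ∧ f injective-relation ∧ ∀ y (y ∈ w₀ ↔ ∃ b ∈ α, ⟨y,b⟩ ∈ f)`. -/
def phiF : SF 2 := .ex (.ex (andF (.mem ((0 : Fin 3).succ) ((0 : Fin 2).succ.succ))
  (andF (injF 0) (surjF (((0 : Fin 1).succ).succ.succ) ((0 : Fin 3).succ) 0))))

/-- `∃ y, ⟨y, b₀⟩ ∈ f₀`. -/
def chiF : SF 2 := .ex (pmemF 0 ((0 : Fin 2).succ) (((0 : Fin 1).succ).succ))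

lemma subsets_mem_M {θ : ZFSet} {M : Set ZFSet} (hθ : IsRegCard θ) (hM : Prec M (HSet θ))
    {κ : ZFSet} (hκ : KappaSpec M κ) {Z : ZFSet} (hZ : Z ∈ M)
    (hpow : (2 : Cardinal.{1}) ^ card Z < card κ) : ∀ y : ZFSet, y ⊆ Z → y ∈ M := by
  classical
  have hinf : ℵ₀ ≤ card θ := aleph0_le_card hθ.2.1
  have hS : GoodS (HSet θ) := goodS_hset hinf
  have hκS : κ ∈ HSet θ := hM.1 hκ.2.1
  have hκθ : card κ < card θ := card_lt_card_of_hset hκS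
  have hpowθ : (2 : Cardinal.{1}) ^ card Z < card θ := hpow.trans hκθ
  set pZ := Z.powerset with hpZdef
  have hpZM : pZ ∈ M := powerset_mem_M hinf hM hZ hpowθ
  have hpZS : pZ ∈ HSet θ := hM.1 hpZM
  have hcard : card pZ < card κ := (card_powerset_le Z).trans_lt hpow
  obtain ⟨β, hβκ, hβc⟩ := exists_large_member hκ.1 hcard
  have hβS : β ∈ HSet θ := hS.tr κ hκS β hβκ
  obtain ⟨g0⟩ : Nonempty (pZ.toSet ↪ β.toSet) := (Cardinal.le_def pZ.toSet β.toSet).1 hβc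
  set g : ZFSet → ZFSet :=
    fun y => if h : y ∈ pZ then (g0 ⟨y, (ZFSet.mem_toSet _ _).2 h⟩).1 else ∅ with hgdef
  letI : ZFSet.Definable₁ g := Classical.allZFSetDefinable _
  set f := ZFSet.map g pZ with hfdef
  have hgval : ∀ y ∈ pZ, g y ∈ β := by
    intro y hy
    rw [hgdef]
    simp only [dif_pos hy]
    exact (ZFSet.mem_toSet _ _).1 (g0 ⟨y, (ZFSet.mem_toSet _ _).2 hy⟩).2
  have hginj : ∀ y ∈ pZ, ∀ y' ∈ pZ, g y = g y' → y = y' := by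
    intro y hy y' hy' h
    rw [hgdef] at h
    simp only [dif_pos hy, dif_pos hy'] at h
    exact congrArg Subtype.val (g0.injective (Subtype.ext h))
  have hfS : f ∈ HSet θ := map_mem_hset hinf hpZS hβS g hgval
  have hΦ : Realize (HSet θ) phiF (vec2 κ pZ) := by
    refine realize_ex.mpr ⟨β, hβS, realize_ex.mpr ⟨f, hfS, ?_⟩⟩
    rw [realize_andF, realize_andF]
    refine ⟨?_, ?_, ?_⟩
    · simp only [realize_mem, Fin.cons_succ, Fin.cons_zero, vec2]
      exact hβκ
    · rw [realize_injF hS]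
      simp only [Fin.cons_zero]
      intro y _ y' _ b _ h1 h2
      rw [hfdef, ZFSet.mem_map] at h1 h2
      obtain ⟨z, hz, hz1⟩ := h1
      obtain ⟨z', hz', hz2⟩ := h2
      obtain ⟨rfl, hb1⟩ := ZFSet.pair_injective hz1
      obtain ⟨rfl, hb2⟩ := ZFSet.pair_injective hz2
      exact hginj _ hz _ hz' (hb1.trans hb2.symm)
    · rw [realize_surjF hS]
      simp only [Fin.cons_succ, Fin.cons_zero, vec2]
      intro y hyS
      constructor
      · intro hy
        refine ⟨g y, hS.tr β hβS _ (hgval y hy), hgval y hy, ?_⟩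
        rw [hfdef]
        exact ZFSet.mem_map.2 ⟨y, hy, rfl⟩
      · rintro ⟨b, _, _, hpb⟩
        rw [hfdef, ZFSet.mem_map] at hpb
        obtain ⟨z, hz, hzeq⟩ := hpb
        obtain ⟨rfl, -⟩ := ZFSet.pair_injective hzeq
        exact hz
  have hv : ∀ i, vec2 κ pZ i ∈ M := vec2_mem hκ.2.1 hpZM
  have hΦM := (hM.2 phiF _ hv).mpr hΦ
  obtain ⟨α, hαM, hΦM2⟩ := realize_ex.mp hΦM
  obtain ⟨f', hf'M, hbodyM⟩ := realize_ex.mp hΦM2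
  have hv4 : ∀ i, (Fin.cons f' (Fin.cons α (vec2 κ pZ)) : Fin 4 → ZFSet) i ∈ M :=
    vecCons_mem (vecCons_mem hv hαM) hf'M
  have hbodyθ := (hM.2 _ _ hv4).mp hbodyM
  rw [realize_andF, realize_andF] at hbodyθ
  obtain ⟨hακ', hinj', hsurj'⟩ := hbodyθ
  have hακ : α ∈ κ := by
    simp only [realize_mem, Fin.cons_succ, Fin.cons_zero, vec2] at hακ'
    exact hακ'
  rw [realize_injF hS] at hinj'
  simp only [Fin.cons_zero] at hinj'
  rw [realize_surjF hS] at hsurj'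
  simp only [Fin.cons_succ, Fin.cons_zero, vec2] at hsurj'
  have hαsub : ∀ x ∈ α, x ∈ M := by
    by_contra hcon
    push_neg at hcon
    obtain ⟨x, hxα, hxM⟩ := hcon
    rcases hκ.2.2.2 α (isOrd_mem hκ.1 hακ) hαM ⟨x, hxα, hxM⟩ with h | h
    · exact ZFSet.mem_asymm hακ h
    · exact ZFSet.mem_irrefl _ (h ▸ hακ)
  intro y hy
  have hypZ : y ∈ pZ := ZFSet.mem_powerset.2 hy
  have hyS : y ∈ HSet θ := hS.tr pZ hpZS y hypZ
  obtain ⟨b, hbS, hbα, hpair⟩ := (hsurj' y hyS).1 hypZ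
  have hbM : b ∈ M := hαsub b hbα
  have hχ : Realize (HSet θ) chiF (vec2 b f') := by
    refine realize_ex.mpr ⟨y, hyS, ?_⟩
    rw [realize_pmemF hS (by simp only [Fin.cons_zero]; exact hyS)
      (by simp only [Fin.cons_succ, vec2, Fin.cons_zero]; exact hbS)]
    simp only [Fin.cons_succ, Fin.cons_zero, vec2]
    exact hpair
  have hvbf : ∀ i, vec2 b f' i ∈ M := vec2_mem hbM hf'M
  have hχM := (hM.2 chiF _ hvbf).mpr hχ
  obtain ⟨y', hy'M, hy'r⟩ := realize_ex.mp hχM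
  have hy'θ := (hM.2 _ _ (vecCons_mem hvbf hy'M)).mp hy'r
  rw [realize_pmemF hS (by simp only [Fin.cons_zero]; exact hM.1 hy'M)
    (by simp only [Fin.cons_succ, vec2, Fin.cons_zero]; exact hbS)] at hy'θ
  simp only [Fin.cons_succ, Fin.cons_zero, vec2] at hy'θ
  have heq : y = y' := hinj' y hyS y' (hM.1 hy'M) b hbS hpair hy'θ
  rw [heq]
  exact hy'M

end Main

/-- If `M ≺ H_θ` is a `δ`-guessing model which is not an `ℵ₀`-guessing model,
then `2^{<δ} ≥ κ_M`. -/
theorem powerlt_ge_of_not_guessing (θ : ZFSet) (hθ : IsRegCard θ)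
    (M : Set ZFSet) (hM : Prec M (HSet θ)) (κ : ZFSet) (hκ : KappaSpec M κ)
    (δ : Cardinal.{1}) (hδκ : δ ≤ card κ) (hG : GuessingModel M δ)
    (hnG : ¬ GuessingModel M ℵ₀) :
    card κ ≤ (2 : Cardinal.{1}) ^< δ := by
  by_contra hlt
  push_neg at hlt
  apply hnG
  intro X hX d hd _hap
  apply hG X hX d hd
  intro Z hZM hZδ
  have hpow : (2 : Cardinal.{1}) ^ card Z < card κ :=
    lt_of_le_of_lt (Cardinal.le_powerlt 2 hZδ) hlt
  exact subsets_mem_M hθ hM hκ hZM hpow _ fun z hz => (ZFSet.mem_inter.1 hz).2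

end GuessingModels
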